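/- The SumDiameter measure ∑_i max_{j≠i} D(x_i, x_j) does not satisfy uniqueness: for the set {0, 1, 2} on the real line, replacing 1 with a second copy of 0 yields {0, 0, 2} with strictly larger SumDiameter (6 versus 5). -/

import Mathlib

open Finset

/-- SumDiameter of a 3-element multiset of reals: `∑_i max_{j ≠ i} |x_i - x_j|`,
the maximum ranging over the other occurrences. -/
noncomputable def sumDiameter3 (f : Fin 3 → ℝ) : ℝ :=
  ∑ i, (Finset.univ.filter (fun j : Fin 3 => j ≠ i)).sup'
    (by
      obtain ⟨y, hy⟩ := exists_ne i
      exact ⟨y, by simp [hy]⟩)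
    (fun j => |f i - f j|)

/-- SumDiameter does not satisfy uniqueness: for `{0,1,2}`, replacing `1` by a second
copy of `0` yields `{0,0,2}` with strictly larger SumDiameter (`6` vs `5`). -/
theorem sumDiameter_not_unique :
    sumDiameter3 ![0, 1, 2] = 5 ∧
    sumDiameter3 ![0, 0, 2] = 6 ∧
    sumDiameter3 ![0, 1, 2] < sumDiameter3 ![0, 0, 2] := by
  have key : ∀ f : Fin 3 → ℝ, sumDiameter3 f =
        max |f 0 - f 1| |f 0 - f 2| + max |f 1 - f 0| |f 1 - f 2| + max |f 2 - f 0| |f 2 - f 1| := by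
    intro f
    have e0 : (univ.erase (0:Fin 3)) = {1,2} := by decide
    have e1 : (univ.erase (1:Fin 3)) = {0,2} := by decide
    have e2 : (univ.erase (2:Fin 3)) = {0,1} := by decide
    simp [sumDiameter3, Fin.sum_univ_three, Finset.filter_ne', e0, e1, e2,
      Finset.sup'_insert, Finset.sup'_singleton]
  have h1 : sumDiameter3 ![0, 1, 2] = 5 := by
    rw [key]; norm_num [abs_of_nonneg, abs_of_nonpos, max_def, Matrix.cons_val_two]
  have h2 : sumDiameter3 ![0, 0, 2] = 6 := by
    rw [key]; norm_num [abs_of_nonneg, abs_of_nonpos, max_def, Matrix.cons_val_two]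
  exact ⟨h1, h2, by rw [h1, h2]; norm_num⟩
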